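/- arXiv:1103.2635 — 3 statements merged into one kernel-verified Lean document; each statement's English description precedes it below -/
import Mathlib

section
/- Let (M, ρ) be a metric space, X a finite subset, R ⊆ X nonempty, and q ∈ M. Assign each x ∈ X to a nearest element of R. Let γ = min_{r∈R} ρ(q,r). If x* is a nearest neighbor of q in X and r* ∈ R is a nearest element of R to x*, then ρ(q, r*) ≤ 3γ. -/
/-- Lemma (prune2): if `x*` is a nearest neighbor of `q` in `X` and `r*` is a nearest
element of `R` to `x*`, then `ρ(q,r*) ≤ 3γ` where `γ = min_{r∈R} ρ(q,r)`. -/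
theorem rbc_prune_lemma {M : Type*} [MetricSpace M] (X R : Finset M)
    (hRX : R ⊆ X) (hR : R.Nonempty) (q xstar rstar : M) (γ : ℝ)
    (hx : xstar ∈ X) (hxNN : ∀ y ∈ X, dist q xstar ≤ dist q y)
    (hr : rstar ∈ R) (hrNN : ∀ r ∈ R, dist xstar rstar ≤ dist xstar r)
    (hγlb : ∀ r ∈ R, γ ≤ dist q r) (hγmem : ∃ r ∈ R, dist q r = γ) :
    dist q rstar ≤ 3 * γ := by
  obtain ⟨r0, hr0, hr0γ⟩ := hγmem
  have h1 : dist q xstar ≤ γ := hr0γ ▸ hxNN r0 (hRX hr0)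
  have h2 : dist xstar rstar ≤ dist xstar r0 := hrNN r0 hr0
  have h3 : dist xstar r0 ≤ dist xstar q + dist q r0 := dist_triangle _ _ _
  have h4 : dist q rstar ≤ dist q xstar + dist xstar rstar := dist_triangle _ _ _
  have h5 : dist xstar q = dist q xstar := dist_comm _ _
  linarith
end

section
/- Exact search correctness: Let X be a finite subset of a metric space, R ⊆ X nonempty, with each x ∈ X assigned to the ownership list L_r of its nearest r ∈ R and ψ_r = max_{x∈L_r} ρ(x,r). For a query q with γ = min_{r∈R} ρ(q,r), the point returned by brute-force search over the union of lists L_r for r ∈ R satisfying both ρ(q,r) < γ + ψ_r and ρ(q,r) ≤ 3γ is a true nearest neighbor of q in X. -/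
/-- Exact search correctness: each `x ∈ X` is assigned to the ownership list of a nearest
representative `owner x ∈ R`; with `ψ_r` an upper bound on distances within `L_r` and
`γ = min_{r∈R} ρ(q,r)`, the minimizer of `ρ(q,·)` over the union of the lists of the
representatives kept by the pruning rules (`ρ(q,r) ≤ γ + ψ_r` and `ρ(q,r) ≤ 3γ`,
pruning only on strict violation) is a true nearest neighbor of `q` in `X`. -/
theorem exact_search_correct {M : Type*} [MetricSpace M] [DecidableEq M]
    (X R : Finset M) (hXne : X.Nonempty) (hRX : R ⊆ X) (hR : R.Nonempty)
    (q : M) (owner : M → M)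
    (howner : ∀ x ∈ X, owner x ∈ R ∧ ∀ r ∈ R, dist x (owner x) ≤ dist x r)
    (L : M → Finset M) (hL : ∀ r, L r = X.filter fun x => owner x = r)
    (ψ : M → ℝ) (hψ : ∀ r ∈ R, ∀ x ∈ L r, dist x r ≤ ψ r)
    (γ : ℝ) (hγlb : ∀ r ∈ R, γ ≤ dist q r) (hγmem : ∃ r ∈ R, dist q r = γ)
    (S : Finset M)
    (hS : S = R.biUnion fun r =>
      if dist q r ≤ γ + ψ r ∧ dist q r ≤ 3 * γ then L r else ∅)
    (x0 : M) (hx0 : x0 ∈ S) (hmin : ∀ x ∈ S, dist q x0 ≤ dist q x) :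
    ∀ y ∈ X, dist q x0 ≤ dist q y := by
  -- pick a true nearest neighbor x* in X
  obtain ⟨xs, hxsX, hxsmin⟩ := X.exists_min_image (fun x => dist q x) hXne
  obtain ⟨r0, hr0R, hr0γ⟩ := hγmem
  -- dist q xs ≤ γ since r0 ∈ X
  have hxsγ : dist q xs ≤ γ := hr0γ ▸ hxsmin r0 (hRX hr0R)
  obtain ⟨hoR, hone⟩ := howner xs hxsX
  set r := owner xs with hr
  have hxsL : xs ∈ L r := by
    rw [hL]; exact Finset.mem_filter.mpr ⟨hxsX, rfl⟩
  have hxsr : dist xs r ≤ ψ r := hψ r hoR xs hxsL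
  have h1 : dist q r ≤ γ + ψ r :=
    (dist_triangle q xs r).trans (by linarith)
  have hxsr0 : dist xs r ≤ dist xs r0 := hone r0 hr0R
  have h2 : dist q r ≤ 3 * γ := by
    have t1 : dist q r ≤ dist q xs + dist xs r := dist_triangle q xs r
    have t2 : dist xs r0 ≤ dist xs q + dist q r0 := dist_triangle xs q r0
    have : dist xs q = dist q xs := dist_comm xs q
    linarith
  have hxsS : xs ∈ S := by
    rw [hS, Finset.mem_biUnion]
    exact ⟨r, hoR, by rw [if_pos ⟨h1, h2⟩]; exact hxsL⟩
  intro y hy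
  exact (hmin xs hxsS).trans (hxsmin y hy)
end

section
/- Expected cost bound for exact search: Let M = X ∪ {q} be a finite metric space with expansion rate c, |X| = n, and let R be a Bernoulli(n_r/n) random subset of X. Let γ be the distance from q to its nearest representative. The number of points examined in the second stage of exact search is at most |B(q,7γ)| ≤ c³|B(q,γ)|, and E|B(q,γ) \ {nearest representative counted}| ≤ n/n_r; consequently, the expected number of distance computations in the second stage is at most c³·n/n_r (plus lower-order terms). -/
open scoped ENNReal
open MeasureTheory

lemma aux_geom {α : Type*} [DecidableEq α] (p : ℝ) (hp0 : 0 < p) (hp1 : p ≤ 1)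
    (f : α → ℝ) (s : Finset α) :
    ∑ x ∈ s, (1 - p) ^ (s.filter fun r => f r ≤ f x).card ≤ (1 - (1 - p) ^ s.card) / p := by
  induction s using Finset.strongInduction with
  | _ s ih =>
    rcases s.eq_empty_or_nonempty with rfl | hs
    · simp
    · obtain ⟨x₀, hx₀, hmax⟩ := s.exists_max_image f hs
      rw [← Finset.add_sum_erase _ _ hx₀]
      have h1 : (s.filter fun r => f r ≤ f x₀) = s := by
        apply Finset.filter_eq_self.2
        intro r hr; exact hmax r hr
      have h1p : (0:ℝ) ≤ 1 - p := by linarith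
      have h2 : ∑ x ∈ s.erase x₀, (1 - p) ^ (s.filter fun r => f r ≤ f x).card
          ≤ ∑ x ∈ s.erase x₀, (1 - p) ^ ((s.erase x₀).filter fun r => f r ≤ f x).card := by
        apply Finset.sum_le_sum
        intro x hx
        apply pow_le_pow_of_le_one h1p (by linarith)
        exact Finset.card_le_card (Finset.monotone_filter_left _ (Finset.erase_subset _ _))
      have h3 := ih (s.erase x₀) (Finset.erase_ssubset hx₀)
      rw [h1]
      obtain ⟨m, hm⟩ : ∃ m, s.card = m + 1 :=
        ⟨s.card - 1, (Nat.succ_pred_eq_of_pos (Finset.card_pos.2 hs)).symm⟩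
      have hec : (s.erase x₀).card = m := by
        rw [Finset.card_erase_of_mem hx₀, hm]; rfl
      rw [hec] at h3
      have hpm : (0:ℝ) ≤ (1-p)^m := pow_nonneg h1p m
      rw [hm]
      have key : (1-p)^(m+1) + (1 - (1-p)^m)/p ≤ (1 - (1-p)^(m+1))/p := by
        rw [le_div_iff₀ hp0, add_mul, div_mul_cancel₀ _ (ne_of_gt hp0)]
        nlinarith [pow_nonneg h1p m, pow_succ (1-p) m, mul_nonneg hpm (sq_nonneg p)]
      calc (1-p)^(m+1) + ∑ x ∈ s.erase x₀, (1 - p) ^ (s.filter fun r => f r ≤ f x).card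
          ≤ (1-p)^(m+1) + (1 - (1-p)^m)/p := by linarith
        _ ≤ (1 - (1-p)^(m+1))/p := key

/-- Expected cost of the second stage of exact search: in a finite metric space with
expansion rate `c`, (i) for every `γ > 0`, `|B(q,7γ)| ≤ c³|B(q,γ)|`; (ii) the expected
number of database points strictly closer to `q` than every Bernoulli(`n_r/n`)-selected
representative is at most `n/n_r`; consequently (iii) the expected number of distance
computations in the second stage is at most `c³·n/n_r`. -/
theorem exact_search_expected_cost {M : Type*} [MetricSpace M] [Fintype M]
    (c : ℝ) (hc : 1 ≤ c)
    (hexp : ∀ (x : M) (t : ℝ), 0 < t →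
      ((Finset.univ.filter fun y => dist x y ≤ 2 * t).card : ℝ) ≤
        c * ((Finset.univ.filter fun y => dist x y ≤ t).card : ℝ))
    (X : Finset M) (q : M) (n nr : ℕ)
    (hn : X.card = n) (hnr : 0 < nr) (hle : nr ≤ n)
    (hp : ENNReal.ofReal ((nr : ℝ) / n) ≤ 1)
    (μ : Measure ({x // x ∈ X} → Bool))
    (hμ : μ = Measure.pi fun _ =>
      (PMF.bernoulli (Real.toNNReal ((nr : ℝ) / n)) (ENNReal.coe_le_one_iff.mp hp)).toMeasure) :
    (∀ γ : ℝ, 0 < γ →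
      ((Finset.univ.filter fun y => dist q y ≤ 7 * γ).card : ℝ) ≤
        c ^ 3 * ((Finset.univ.filter fun y => dist q y ≤ γ).card : ℝ)) ∧
    ((∫ ω, (({x : M | x ∈ X ∧ ∀ r : {x // x ∈ X}, ω r = true →
        dist q x < dist q (r : M)}.ncard : ℝ)) ∂μ) ≤ (n : ℝ) / nr) ∧
    ((∫ ω, c ^ 3 * (({x : M | x ∈ X ∧ ∀ r : {x // x ∈ X}, ω r = true →
        dist q x < dist q (r : M)}.ncard : ℝ)) ∂μ) ≤ c ^ 3 * ((n : ℝ) / nr)) := by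
  classical
  have hc0 : (0:ℝ) ≤ c := by linarith
  -- Part (i)
  have part1 : ∀ γ : ℝ, 0 < γ →
      ((Finset.univ.filter fun y => dist q y ≤ 7 * γ).card : ℝ) ≤
        c ^ 3 * ((Finset.univ.filter fun y => dist q y ≤ γ).card : ℝ) := by
    intro γ hγ
    set k : ℝ → ℝ := fun t => ((Finset.univ.filter fun y => dist q y ≤ t).card : ℝ) with hk
    have hmono : ∀ a b : ℝ, a ≤ b → k a ≤ k b := by
      intro a b hab
      simp only [hk]
      exact_mod_cast Finset.card_le_card (Finset.monotone_filter_right _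
        (fun y _ hy => le_trans hy hab))
    have hdbl : ∀ t : ℝ, 0 < t → k (2*t) ≤ c * k t := fun t ht => hexp q t ht
    have e1 : (7:ℝ)*γ ≤ 2*(4*γ) := by linarith
    have e2 : (4:ℝ)*γ = 2*(2*γ) := by ring
    calc k (7*γ) ≤ k (2*(4*γ)) := hmono _ _ e1
      _ ≤ c * k (4*γ) := hdbl _ (by linarith)
      _ = c * k (2*(2*γ)) := by rw [e2]
      _ ≤ c * (c * k (2*γ)) := mul_le_mul_of_nonneg_left (hdbl _ (by linarith)) hc0
      _ ≤ c * (c * (c * k γ)) := mul_le_mul_of_nonneg_left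
          (mul_le_mul_of_nonneg_left (hdbl _ hγ) hc0) hc0
      _ = c^3 * k γ := by ring
  -- Part (ii)
  have hn0 : 0 < n := lt_of_lt_of_le hnr hle
  set p : ℝ := (nr:ℝ)/n with hpdef
  have hp0 : 0 < p := div_pos (by exact_mod_cast hnr) (by exact_mod_cast hn0)
  have hp1 : p ≤ 1 := by
    rw [hpdef, div_le_one (by exact_mod_cast hn0)]
    exact_mod_cast hle
  subst hμ
  set P : ({x // x ∈ X} → Bool) → M → Prop :=
    fun ω x => ∀ r : {x // x ∈ X}, ω r = true → dist q x < dist q (r : M) with hP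
  -- pointwise rewriting of the integrand
  have hpt : ∀ ω, ({x : M | x ∈ X ∧ P ω x}.ncard : ℝ)
      = ∑ r₀ : {x // x ∈ X}, (if P ω (r₀:M) then (1:ℝ) else 0) := by
    intro ω
    have hset : {x : M | x ∈ X ∧ P ω x} = ↑(X.filter (P ω)) := by
      ext x; simp [Finset.mem_filter]
    rw [hset, Set.ncard_coe_finset, Finset.card_filter]
    push_cast
    exact (Finset.sum_coe_sort X (fun x => if P ω x then (1:ℝ) else 0)).symm
  -- the probability of each event
  have hmeas : ∀ x : M, (Measure.pi fun _ : {x // x ∈ X} =>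
      (PMF.bernoulli (Real.toNNReal p) (ENNReal.coe_le_one_iff.mp hp)).toMeasure) {ω | P ω x}
      = (1 - ENNReal.ofReal p) ^
          (Finset.univ.filter fun r : {x // x ∈ X} => dist q (r:M) ≤ dist q x).card := by
    intro x
    have hset : {ω | P ω x} = Set.pi Set.univ
        (fun r : {x // x ∈ X} => if dist q (r:M) ≤ dist q x then {false} else Set.univ) := by
      ext ω
      simp only [Set.mem_setOf_eq, Set.mem_pi, Set.mem_univ, forall_true_left, hP]
      constructor
      · intro h r
        split_ifs with hr
        · simp only [Set.mem_singleton_iff]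
          cases hb : ω r with
          | false => rfl
          | true => exact absurd hr (not_le.2 (h r hb))
        · trivial
      · intro h r hb
        have hr := h r
        by_contra hlt
        push_neg at hlt
        rw [if_pos hlt, hb] at hr
        simp at hr
    rw [hset, Measure.pi_pi]
    have hfac : ∀ r : {x // x ∈ X},
        (PMF.bernoulli (Real.toNNReal p) (ENNReal.coe_le_one_iff.mp hp)).toMeasure
          (if dist q (r:M) ≤ dist q x then {false} else Set.univ)
        = (if dist q (r:M) ≤ dist q x then 1 - ENNReal.ofReal p else 1) := by
      intro r
      split_ifs with hr
      · rw [PMF.toMeasure_apply_singleton _ _ (measurableSet_singleton _)]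
        simp [PMF.bernoulli, ENNReal.ofReal]
      · exact measure_univ
    rw [Finset.prod_congr rfl (fun r _ => hfac r), Finset.prod_ite, Finset.prod_const,
      Finset.prod_const, one_pow, mul_one]
  -- the value of each integral
  have hone : ∀ x : M,
      (∫ ω, (if P ω x then (1:ℝ) else 0) ∂(Measure.pi fun _ : {x // x ∈ X} =>
        (PMF.bernoulli (Real.toNNReal p) (ENNReal.coe_le_one_iff.mp hp)).toMeasure))
      = (1 - p) ^
          (Finset.univ.filter fun r : {x // x ∈ X} => dist q (r:M) ≤ dist q x).card := by
    intro x
    have hind : (fun ω => if P ω x then (1:ℝ) else 0) = {ω | P ω x}.indicator 1 := by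
      funext ω; simp [Set.indicator_apply]
    rw [hind, integral_indicator_one ((Set.toFinite _).measurableSet), measureReal_def, hmeas x]
    have hsub : (1:ℝ≥0∞) - ENNReal.ofReal p = ENNReal.ofReal (1-p) := by
      rw [ENNReal.ofReal_sub 1 hp0.le, ENNReal.ofReal_one]
    rw [hsub, ENNReal.toReal_pow, ENNReal.toReal_ofReal (by linarith)]
  have part2 : (∫ ω, (({x : M | x ∈ X ∧ P ω x}.ncard : ℝ))
      ∂(Measure.pi fun _ : {x // x ∈ X} =>
        (PMF.bernoulli (Real.toNNReal p) (ENNReal.coe_le_one_iff.mp hp)).toMeasure)) ≤ (n : ℝ) / nr := by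
    rw [integral_congr_ae (Filter.Eventually.of_forall hpt), integral_finset_sum _
      (fun r₀ _ => Integrable.of_finite)]
    simp only [hone]
    have := aux_geom p hp0 hp1 (fun r : {x // x ∈ X} => dist q (r:M)) Finset.univ
    have hNcard : (Finset.univ : Finset {x // x ∈ X}).card = n := by
      rw [Finset.card_univ, Fintype.card_coe, hn]
    calc ∑ r₀ : {x // x ∈ X}, (1 - p) ^
          (Finset.univ.filter fun r : {x // x ∈ X} => dist q (r:M) ≤ dist q (r₀:M)).card
        ≤ (1 - (1-p)^(Finset.univ : Finset {x // x ∈ X}).card) / p := this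
      _ ≤ 1 / p := by
          gcongr
          nlinarith [pow_nonneg (by linarith : (0:ℝ) ≤ 1-p)
            (Finset.univ : Finset {x // x ∈ X}).card]
      _ = (n:ℝ)/nr := by rw [hpdef, one_div_div]
  exact ⟨part1, part2, by
    rw [integral_const_mul]
    exact mul_le_mul_of_nonneg_left part2 (by positivity)⟩
end
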